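/- Let Φ be a reduced root system and R a commutative ring. The cup product of two closed cochains is closed: if d^p ω^p = 0 and d^q ω^q = 0 then d^{p+q}(ω^p ∪ ω^q) = 0. Moreover, the cup product of a closed cochain with an exact cochain (on either side) is exact: if d^p ω^p = 0 and ω^q = d^{q−1} η for some η ∈ C^{q−1}(Φ,R), then ω^p ∪ ω^q and ω^q ∪ ω^p are coboundaries. -/
import Mathlib


open scoped RealInnerProductSpace

/-- A reduced root system `Φ` in a real inner product space `V`:
a finite set of nonzero vectors spanning `V`, closed under the reflections it determines,
with integral Cartan numbers, such that the only multiples of a root in `Φ` are `±α`. -/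
structure ReducedRootSystem (V : Type) [NormedAddCommGroup V] [InnerProductSpace ℝ V] :
    Type where
  roots : Set V
  finite : roots.Finite
  nonzero : ∀ α ∈ roots, α ≠ 0
  spans : Submodule.span ℝ roots = ⊤
  reflect_mem : ∀ α ∈ roots, ∀ β ∈ roots, β - (2 * ⟪β, α⟫ / ⟪α, α⟫) • α ∈ roots
  integral : ∀ α ∈ roots, ∀ β ∈ roots, ∃ n : ℤ, 2 * ⟪β, α⟫ / ⟪α, α⟫ = (n : ℝ)
  reduced : ∀ α ∈ roots, ∀ t : ℝ, t • α ∈ roots → t = 1 ∨ t = -1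

variable {V : Type} [NormedAddCommGroup V] [InnerProductSpace ℝ V]

/-- `Φ₀ = Φ ∪ {0}`. -/
def rootsZero (Φ : ReducedRootSystem V) : Set V := insert 0 Φ.roots

/-- Contraction of a tuple at position `j` (adding the `j`-th and `(j+1)`-st entries). -/
def contractAt (l : List V) (j : ℕ) : List V :=
  l.take j ++ (l.getD j 0 + l.getD (j + 1) 0) :: l.drop (j + 2)

/-- `IsRootChainAux Φ n l`: the tuple `l` of length `n` is a generator of `T_n(Φ)`:
`T₁(Φ) = Φ₀`, and an `n`-tuple with entries in `Φ₀` lies in `T_n(Φ)` iff all its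
contractions lie in `T_{n-1}(Φ)`. -/
def IsRootChainAux (Φ : ReducedRootSystem V) : ℕ → List V → Prop
  | 0, _ => False
  | 1, l => ∃ r ∈ rootsZero Φ, l = [r]
  | n + 2, l => l.length = n + 2 ∧ (∀ r ∈ l, r ∈ rootsZero Φ) ∧
      ∀ j, j + 1 < l.length → IsRootChainAux Φ (n + 1) (contractAt l j)

/-- `l` is a generator of `T_{l.length}(Φ)`. -/
def IsRootChain (Φ : ReducedRootSystem V) (l : List V) : Prop := IsRootChainAux Φ l.length l

open Classical in
/-- Evaluation of a cochain on a chain generator: tuples containing `0` are identified with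
the zero chain `0ₙ`, on which any cochain vanishes. -/
noncomputable def chainEv {M : Type} [Zero M] (ω : List V → M) (l : List V) : M :=
  if (0 : V) ∈ l then 0 else ω l

/-- The coboundary operator `dⁿ` on cochains, `dⁿωⁿ(r₀|⋯|rₙ) = ωⁿ(∂ⁿ[r₀|⋯|rₙ])`. -/
noncomputable def cobd {M : Type} [AddCommGroup M] (ω : List V → M) (l : List V) : M :=
  chainEv ω l.tail
    + (∑ j ∈ Finset.range (l.length - 1), ((-1 : ℤ) ^ (j + 1)) • chainEv ω (contractAt l j))
    - ((-1 : ℤ) ^ (l.length - 1)) • chainEv ω l.dropLast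

/-- The cup product of a `p`-cochain `ωp` with a cochain `ωq`:
`(ωp ∪ ωq)(r₁|⋯|r_{p+q}) = ωp(r₁|⋯|r_p) · ωq(r_{p+1}|⋯|r_{p+q})`. -/
noncomputable def cup {R : Type} [CommRing R] (p : ℕ) (ωp ωq : List V → R)
    (l : List V) : R :=
  chainEv ωp (l.take p) * chainEv ωq (l.drop p)

section Aux

set_option linter.unusedSectionVars false

/-! ### List lemmas -/

lemma getD_take (l : List V) {m i : ℕ} (h : i < m) : (l.take m).getD i 0 = l.getD i 0 := by
  simp [List.getD, List.getElem?_take_of_lt h]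

lemma getD_drop (l : List V) (m i : ℕ) : (l.drop m).getD i 0 = l.getD (m + i) 0 := by
  simp [List.getD, List.getElem?_drop]

lemma getD_tail (l : List V) (i : ℕ) : l.tail.getD i 0 = l.getD (i + 1) 0 := by
  rw [← List.drop_one, getD_drop, Nat.add_comm]

lemma getD_dropLast (l : List V) {i : ℕ} (h : i < l.length - 1) :
    l.dropLast.getD i 0 = l.getD i 0 := by
  rw [List.dropLast_eq_take, getD_take l h]

lemma drop_tail (l : List V) (m : ℕ) : l.tail.drop m = l.drop (m + 1) := by
  rw [← List.drop_one, List.drop_drop, Nat.add_comm]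

lemma tail_take (l : List V) (m : ℕ) : (l.take (m + 1)).tail = l.tail.take m := by
  rw [← List.drop_one, List.drop_take, Nat.add_sub_cancel, List.drop_one]

lemma take_dropLast (l : List V) {m : ℕ} (h : m ≤ l.length - 1) :
    l.dropLast.take m = l.take m := by
  rw [List.dropLast_eq_take, List.take_take, Nat.min_eq_left h]

lemma drop_dropLast (l : List V) (m : ℕ) : l.dropLast.drop m = (l.drop m).dropLast := by
  rw [List.dropLast_eq_take, List.drop_take, List.dropLast_eq_take, List.length_drop]
  congr 1
  omega

lemma dropLast_take (l : List V) {m : ℕ} (h : m + 1 ≤ l.length) :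
    (l.take (m + 1)).dropLast = l.take m := by
  rw [List.dropLast_eq_take, List.take_take, List.length_take, Nat.min_eq_left h,
    Nat.add_sub_cancel, Nat.min_eq_left (Nat.le_succ m)]

lemma take_append_cons {a : List V} {m : ℕ} (h : a.length < m) (x : V) (b : List V) :
    (a ++ x :: b).take m = a ++ x :: b.take (m - a.length - 1) := by
  obtain ⟨k, hk⟩ : ∃ k, m - a.length = k + 1 := ⟨m - a.length - 1, by omega⟩
  rw [List.take_append, List.take_of_length_le (by omega), hk,
    List.take_succ_cons, Nat.add_sub_cancel]

lemma drop_append_cons_of_lt {a : List V} {m : ℕ} (h : a.length < m) (x : V) (b : List V) :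
    (a ++ x :: b).drop m = b.drop (m - a.length - 1) := by
  obtain ⟨k, hk⟩ : ∃ k, m - a.length = k + 1 := ⟨m - a.length - 1, by omega⟩
  rw [List.drop_append, List.drop_of_length_le (by omega), List.nil_append,
    hk, List.drop_succ_cons, Nat.add_sub_cancel]

lemma take_append_cons_of_le {a : List V} {m : ℕ} (h : m ≤ a.length) (x : V) (b : List V) :
    (a ++ x :: b).take m = a.take m := by
  rw [List.take_append, Nat.sub_eq_zero_of_le h, List.take_zero,
    List.append_nil]

lemma drop_append_cons_of_le {a : List V} {m : ℕ} (h : m ≤ a.length) (x : V) (b : List V) :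
    (a ++ x :: b).drop m = a.drop m ++ x :: b := by
  rw [List.drop_append, Nat.sub_eq_zero_of_le h, List.drop_zero]

lemma take_contractAt (l : List V) {p j : ℕ} (hj : j < p) (hp : p + 1 ≤ l.length) :
    (contractAt l j).take p = contractAt (l.take (p + 1)) j := by
  rw [contractAt, take_append_cons (by rw [List.length_take]; omega),
    List.length_take, contractAt, List.take_take, getD_take l (by omega),
    getD_take l (by omega), List.drop_take,
    show min j (p + 1) = j by omega, show min j l.length = j by omega,
    show p + 1 - (j + 2) = p - j - 1 by omega]

lemma drop_contractAt_of_lt (l : List V) {p j : ℕ} (hj : j < p) (hjl : j + 1 < l.length) :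
    (contractAt l j).drop p = l.drop (p + 1) := by
  rw [contractAt, drop_append_cons_of_lt (by rw [List.length_take]; omega),
    List.length_take, List.drop_drop, show j + 2 + (p - min j l.length - 1) = p + 1 by omega]

lemma take_contractAt_of_le (l : List V) {p j : ℕ} (hj : p ≤ j) (hjl : j ≤ l.length) :
    (contractAt l j).take p = l.take p := by
  rw [contractAt, take_append_cons_of_le (by rw [List.length_take]; omega),
    List.take_take, Nat.min_eq_left hj]

lemma drop_contractAt_of_le (l : List V) {p k : ℕ} (hp : p ≤ l.length) :
    (contractAt l (p + k)).drop p = contractAt (l.drop p) k := by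
  rw [contractAt, drop_append_cons_of_le (by rw [List.length_take]; omega),
    contractAt, List.drop_take, getD_drop, getD_drop, List.drop_drop,
    show p + k - p = k by omega, show p + (k + 1) = p + k + 1 by omega,
    show p + (k + 2) = p + k + 2 by omega]

lemma tail_contractAt (l : List V) (j : ℕ) (hl : l ≠ []) :
    (contractAt l (j + 1)).tail = contractAt l.tail j := by
  rw [contractAt, List.tail_append_of_ne_nil (by simp [List.take_eq_nil_iff, hl]),
    contractAt, tail_take, getD_tail, getD_tail, drop_tail,
    show j + 2 + 1 = j + 1 + 2 by omega]

lemma dropLast_contractAt (l : List V) {j : ℕ} (h : j + 2 < l.length) :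
    (contractAt l j).dropLast = contractAt l.dropLast j := by
  have hne : l.drop (j + 2) ≠ [] := by
    apply List.length_pos_iff.mp
    rw [List.length_drop]
    omega
  rw [contractAt, contractAt, List.dropLast_append_cons, List.dropLast_cons_of_ne_nil hne,
    take_dropLast l (by omega), getD_dropLast l (by omega), getD_dropLast l (by omega),
    drop_dropLast]

/-! ### Chain lemmas -/

lemma isRootChainAux_succ_succ (Φ : ReducedRootSystem V) (n : ℕ) (l : List V) :
    IsRootChainAux Φ (n + 2) l ↔
      l.length = n + 2 ∧ (∀ r ∈ l, r ∈ rootsZero Φ) ∧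
        ∀ j, j + 1 < l.length → IsRootChainAux Φ (n + 1) (contractAt l j) := Iff.rfl

lemma isRootChainAux_one (Φ : ReducedRootSystem V) (l : List V) :
    IsRootChainAux Φ 1 l ↔ ∃ r ∈ rootsZero Φ, l = [r] := Iff.rfl

lemma chain_tail (Φ : ReducedRootSystem V) :
    ∀ (n : ℕ) (l : List V), IsRootChainAux Φ (n + 2) l → IsRootChainAux Φ (n + 1) l.tail := by
  intro n
  induction n with
  | zero =>
    intro l h
    obtain ⟨hlen, hmem, -⟩ := (isRootChainAux_succ_succ Φ 0 l).mp h
    obtain ⟨a, b, rfl⟩ := List.length_eq_two.mp hlen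
    exact (isRootChainAux_one Φ _).mpr ⟨b, hmem b (by simp), rfl⟩
  | succ n ih =>
    intro l h
    obtain ⟨hlen, hmem, hcon⟩ := (isRootChainAux_succ_succ Φ (n + 1) l).mp h
    have hne : l ≠ [] := fun hl => by simp [hl] at hlen
    refine (isRootChainAux_succ_succ Φ n l.tail).mpr
      ⟨?_, fun r hr => hmem r (List.mem_of_mem_tail hr), fun j hj => ?_⟩
    · rw [List.length_tail, hlen]; omega
    · rw [← tail_contractAt l j hne]
      have hj2 : j + 1 + 1 < l.length := by rw [List.length_tail] at hj; omega
      exact ih _ (hcon (j + 1) hj2)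

lemma chain_dropLast (Φ : ReducedRootSystem V) :
    ∀ (n : ℕ) (l : List V),
      IsRootChainAux Φ (n + 2) l → IsRootChainAux Φ (n + 1) l.dropLast := by
  intro n
  induction n with
  | zero =>
    intro l h
    obtain ⟨hlen, hmem, -⟩ := (isRootChainAux_succ_succ Φ 0 l).mp h
    obtain ⟨a, b, rfl⟩ := List.length_eq_two.mp hlen
    exact (isRootChainAux_one Φ _).mpr ⟨a, hmem a (by simp), by simp⟩
  | succ n ih =>
    intro l h
    obtain ⟨hlen, hmem, hcon⟩ := (isRootChainAux_succ_succ Φ (n + 1) l).mp h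
    refine (isRootChainAux_succ_succ Φ n l.dropLast).mpr
      ⟨?_, fun r hr => hmem r ((List.dropLast_sublist l).subset hr), fun j hj => ?_⟩
    · rw [List.length_dropLast, hlen]; omega
    · rw [List.length_dropLast] at hj
      rw [← dropLast_contractAt l (show j + 2 < l.length by omega)]
      exact ih _ (hcon j (by omega))

lemma chain_drop (Φ : ReducedRootSystem V) :
    ∀ (m : ℕ) (l : List V), m + 1 ≤ l.length → IsRootChain Φ l → IsRootChain Φ (l.drop m) := by
  intro m
  induction m with
  | zero => intro l _ h; rw [List.drop_zero]; exact h
  | succ m ih =>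
    intro l hm h
    obtain ⟨k, hk⟩ : ∃ k, l.length = k + 2 := ⟨l.length - 2, by omega⟩
    have htail : IsRootChain Φ l.tail := by
      have h2 := chain_tail Φ k l (by rw [IsRootChain, hk] at h; exact h)
      rw [IsRootChain, List.length_tail, hk]
      exact h2
    have hd : l.drop (m + 1) = l.tail.drop m := by rw [drop_tail]
    rw [hd]
    exact ih l.tail (by rw [List.length_tail]; omega) htail

lemma chain_take (Φ : ReducedRootSystem V) :
    ∀ (k m : ℕ) (l : List V), 1 ≤ m → m + k = l.length → IsRootChain Φ l →
      IsRootChain Φ (l.take m) := by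
  intro k
  induction k with
  | zero =>
    intro m l _ hm h
    rw [show m = l.length by omega, List.take_length]
    exact h
  | succ k ih =>
    intro m l h1 hm h
    obtain ⟨t, ht⟩ : ∃ t, l.length = t + 2 := ⟨l.length - 2, by omega⟩
    have hdl : IsRootChain Φ l.dropLast := by
      have h2 := chain_dropLast Φ t l (by rw [IsRootChain, ht] at h; exact h)
      rw [IsRootChain, List.length_dropLast, ht]
      exact h2
    have hd : l.take m = l.dropLast.take m := by rw [take_dropLast l (by omega)]
    rw [hd]
    exact ih m l.dropLast h1 (by rw [List.length_dropLast]; omega) hdl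

/-! ### chainEv and cobd lemmas -/

lemma chainEv_of_mem {M : Type} [Zero M] (ω : List V → M) {l : List V} (h : (0 : V) ∈ l) :
    chainEv ω l = 0 := by
  simp [chainEv, h]

lemma chainEv_of_notMem {M : Type} [Zero M] (ω : List V → M) {l : List V} (h : (0 : V) ∉ l) :
    chainEv ω l = ω l := by
  simp [chainEv, h]

lemma chainEv_cup {R : Type} [CommRing R] (p : ℕ) (ωp ωq : List V → R) (l : List V) :
    chainEv (cup p ωp ωq) l = chainEv ωp (l.take p) * chainEv ωq (l.drop p) := by
  by_cases h : (0 : V) ∈ l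
  · rw [chainEv_of_mem _ h]
    have h2 : (0 : V) ∈ l.take p ++ l.drop p := by rw [List.take_append_drop]; exact h
    rcases List.mem_append.mp h2 with h' | h'
    · rw [chainEv_of_mem _ h', zero_mul]
    · rw [chainEv_of_mem _ h', mul_zero]
  · rw [chainEv_of_notMem _ h]
    rfl

lemma chainEv_const_mul {R : Type} [CommRing R] (c : R) (ω : List V → R) (l : List V) :
    chainEv (fun x => c * ω x) l = c * chainEv ω l := by
  by_cases h : (0 : V) ∈ l
  · rw [chainEv_of_mem _ h, chainEv_of_mem _ h, mul_zero]
  · rw [chainEv_of_notMem _ h, chainEv_of_notMem _ h]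

lemma cobd_const_mul {R : Type} [CommRing R] (c : R) (ω : List V → R) (l : List V) :
    cobd (fun x => c * ω x) l = c * cobd ω l := by
  simp only [cobd, chainEv_const_mul, zsmul_eq_mul, Finset.mul_sum, mul_add, mul_sub]
  congr 1
  · congr 1
    exact Finset.sum_congr rfl fun j _ => by ring
  · ring

/-! ### The Leibniz rule for the cup product -/

lemma leibniz {R : Type} [CommRing R] (p q : ℕ) (ωp ωq : List V → R) (l : List V)
    (hl : l.length = p + q + 1) :
    cobd (cup p ωp ωq) l =
      cobd ωp (l.take (p + 1)) * chainEv ωq (l.drop (p + 1))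
        + ((-1 : ℤ) ^ p) • (chainEv ωp (l.take p) * cobd ωq (l.drop p)) := by
  have hlp : (l.take (p + 1)).length = p + 1 := by rw [List.length_take]; omega
  have hlq : (l.drop p).length = q + 1 := by rw [List.length_drop]; omega
  have key : ∑ j ∈ Finset.range (p + q), ((-1 : ℤ) ^ (j + 1)) •
        (chainEv ωp ((contractAt l j).take p) * chainEv ωq ((contractAt l j).drop p))
      = (∑ j ∈ Finset.range p,
            ((-1 : ℤ) ^ (j + 1)) • chainEv ωp (contractAt (l.take (p + 1)) j))
          * chainEv ωq (l.drop (p + 1))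
        + ((-1 : ℤ) ^ p) • (chainEv ωp (l.take p) *
            ∑ k ∈ Finset.range q, ((-1 : ℤ) ^ (k + 1)) • chainEv ωq (contractAt (l.drop p) k)) := by
    rw [Finset.sum_range_add]
    congr 1
    · rw [Finset.sum_mul]
      refine Finset.sum_congr rfl fun j hj => ?_
      have hj' := Finset.mem_range.mp hj
      rw [take_contractAt l hj' (by omega), drop_contractAt_of_lt l hj' (by omega),
        smul_mul_assoc]
    · rw [Finset.mul_sum, Finset.smul_sum]
      refine Finset.sum_congr rfl fun k hk => ?_
      have hk' := Finset.mem_range.mp hk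
      rw [take_contractAt_of_le l (by omega) (by omega), drop_contractAt_of_le l (by omega),
        show p + k + 1 = p + (k + 1) by omega, pow_add, mul_smul, mul_smul_comm]
  simp only [cobd, chainEv_cup, hl, hlp, hlq, Nat.add_sub_cancel]
  rw [tail_take, drop_tail, dropLast_take l (by omega), take_dropLast l (by omega),
    drop_dropLast, List.tail_drop, key]
  simp only [zsmul_eq_mul]
  push_cast
  ring

end Aux
/-- The cup product of two closed cochains is closed, and the cup product
of a closed cochain with an exact cochain (on either side) is exact.  (Cochain identities
are identities of forms on `C_n(Φ)`, i.e. they hold on every chain of the relevant length.) -/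
theorem cup_closed_and_exact
    {V : Type} [NormedAddCommGroup V] [InnerProductSpace ℝ V] [FiniteDimensional ℝ V]
    (Φ : ReducedRootSystem V) (R : Type) [CommRing R] (p q : ℕ) (hp : 1 ≤ p) (hq : 1 ≤ q)
    (ωp ωq : List V → R)
    (hclosedp : ∀ l : List V, l.length = p + 1 → IsRootChain Φ l → cobd ωp l = 0) :
    ((∀ l : List V, l.length = q + 1 → IsRootChain Φ l → cobd ωq l = 0) →
        ∀ l : List V, l.length = p + q + 1 → IsRootChain Φ l → cobd (cup p ωp ωq) l = 0) ∧
    (∀ η : List V → R,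
      (∀ l : List V, l.length = q → IsRootChain Φ l → chainEv ωq l = chainEv (cobd η) l) →
      (∃ ξ : List V → R, ∀ l : List V, l.length = p + q → IsRootChain Φ l →
          chainEv (cup p ωp ωq) l = chainEv (cobd ξ) l) ∧
      (∃ ξ : List V → R, ∀ l : List V, l.length = q + p → IsRootChain Φ l →
          chainEv (cup q ωq ωp) l = chainEv (cobd ξ) l)) := by
  constructor
  · intro hclosedq l hlen hchain
    rw [leibniz p q ωp ωq l hlen]
    have h1 : (l.take (p + 1)).length = p + 1 := by rw [List.length_take]; omega
    have h2 : (l.drop p).length = q + 1 := by rw [List.length_drop]; omega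
    rw [hclosedp _ h1 (chain_take Φ q (p + 1) l (by omega) (by omega) hchain),
      hclosedq _ h2 (chain_drop Φ p l (by omega) hchain), zero_mul, mul_zero, smul_zero,
      zero_add]
  · intro η hη
    constructor
    · refine ⟨fun x => (-1 : R) ^ p * cup p ωp η x, fun l hlen hchain => ?_⟩
      by_cases h0 : (0 : V) ∈ l
      · rw [chainEv_of_mem _ h0, chainEv_of_mem _ h0]
      · rw [chainEv_of_notMem _ h0, chainEv_of_notMem _ h0, cobd_const_mul,
          leibniz p (q - 1) ωp η l (by omega)]
        have hts : (l.take (p + 1)).length = p + 1 := by rw [List.length_take]; omega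
        rw [hclosedp _ hts (chain_take Φ (q - 1) (p + 1) l (by omega) (by omega) hchain),
          zero_mul, zero_add]
        have hds : (l.drop p).length = q := by rw [List.length_drop]; omega
        have hdc := chain_drop Φ p l (by omega) hchain
        have h0d : (0 : V) ∉ l.drop p := fun hm => h0 ((List.drop_sublist p l).subset hm)
        have hsq : ((-1 : R) ^ p) * ((-1 : R) ^ p) = 1 := by
          rw [← pow_add, ← two_mul, pow_mul, neg_one_sq, one_pow]
        show chainEv ωp (l.take p) * chainEv ωq (l.drop p) = _
        rw [hη _ hds hdc, chainEv_of_notMem _ h0d]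
        simp only [zsmul_eq_mul]
        push_cast
        rw [← mul_assoc, hsq, one_mul]
    · refine ⟨cup (q - 1) η ωp, fun l hlen hchain => ?_⟩
      by_cases h0 : (0 : V) ∈ l
      · rw [chainEv_of_mem _ h0, chainEv_of_mem _ h0]
      · rw [chainEv_of_notMem _ h0, chainEv_of_notMem _ h0,
          leibniz (q - 1) p η ωp l (by omega), show q - 1 + 1 = q by omega]
        have hds : (l.drop (q - 1)).length = p + 1 := by rw [List.length_drop]; omega
        rw [hclosedp _ hds (chain_drop Φ (q - 1) l (by omega) hchain), mul_zero, smul_zero,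
          add_zero]
        have hts : (l.take q).length = q := by rw [List.length_take]; omega
        have htc := chain_take Φ p q l (by omega) (by omega) hchain
        have h0t : (0 : V) ∉ l.take q := fun hm => h0 ((List.take_sublist q l).subset hm)
        show chainEv ωq (l.take q) * chainEv ωp (l.drop q) = _
        rw [hη _ hts htc, chainEv_of_notMem _ h0t]
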